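/- arXiv:1303.3173 — 4 statements merged into one kernel-verified Lean document; each statement's English description precedes it below -/
import Mathlib

section
/- Let R be a commutative local ring and let s ∈ U(R). Then the ring K_s(R) is quasipolar if and only if K_s(R) is strongly clean. -/
/-- The generalized matrix ring `K_s(R)` with multiplier `s`. -/
@[ext]
structure GenMatrix (R : Type*) (s : R) where
  a : R
  b : R
  c : R
  d : R

namespace GenMatrix

variable {R : Type*} [Ring R] {s : R}

instance : Add (GenMatrix R s) :=
  ⟨fun X Y => ⟨X.a + Y.a, X.b + Y.b, X.c + Y.c, X.d + Y.d⟩⟩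
instance : Neg (GenMatrix R s) := ⟨fun X => ⟨-X.a, -X.b, -X.c, -X.d⟩⟩
instance : Zero (GenMatrix R s) := ⟨⟨0, 0, 0, 0⟩⟩
instance : One (GenMatrix R s) := ⟨⟨1, 0, 0, 1⟩⟩
instance : Mul (GenMatrix R s) :=
  ⟨fun X Y => ⟨X.a * Y.a + s * (X.b * Y.c), X.a * Y.b + X.b * Y.d,
    X.c * Y.a + X.d * Y.c, s * (X.c * Y.b) + X.d * Y.d⟩⟩

@[simp] lemma add_a (X Y : GenMatrix R s) : (X + Y).a = X.a + Y.a := rfl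
@[simp] lemma add_b (X Y : GenMatrix R s) : (X + Y).b = X.b + Y.b := rfl
@[simp] lemma add_c (X Y : GenMatrix R s) : (X + Y).c = X.c + Y.c := rfl
@[simp] lemma add_d (X Y : GenMatrix R s) : (X + Y).d = X.d + Y.d := rfl
@[simp] lemma neg_a (X : GenMatrix R s) : (-X).a = -X.a := rfl
@[simp] lemma neg_b (X : GenMatrix R s) : (-X).b = -X.b := rfl
@[simp] lemma neg_c (X : GenMatrix R s) : (-X).c = -X.c := rfl
@[simp] lemma neg_d (X : GenMatrix R s) : (-X).d = -X.d := rfl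
@[simp] lemma zero_a : (0 : GenMatrix R s).a = 0 := rfl
@[simp] lemma zero_b : (0 : GenMatrix R s).b = 0 := rfl
@[simp] lemma zero_c : (0 : GenMatrix R s).c = 0 := rfl
@[simp] lemma zero_d : (0 : GenMatrix R s).d = 0 := rfl
@[simp] lemma one_a : (1 : GenMatrix R s).a = 1 := rfl
@[simp] lemma one_b : (1 : GenMatrix R s).b = 0 := rfl
@[simp] lemma one_c : (1 : GenMatrix R s).c = 0 := rfl
@[simp] lemma one_d : (1 : GenMatrix R s).d = 1 := rfl
@[simp] lemma mul_a (X Y : GenMatrix R s) : (X * Y).a = X.a * Y.a + s * (X.b * Y.c) := rfl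
@[simp] lemma mul_b (X Y : GenMatrix R s) : (X * Y).b = X.a * Y.b + X.b * Y.d := rfl
@[simp] lemma mul_c (X Y : GenMatrix R s) : (X * Y).c = X.c * Y.a + X.d * Y.c := rfl
@[simp] lemma mul_d (X Y : GenMatrix R s) : (X * Y).d = s * (X.c * Y.b) + X.d * Y.d := rfl

instance : AddCommGroup (GenMatrix R s) where
  add_assoc X Y Z := by ext <;> simp [add_assoc]
  zero_add X := by ext <;> simp
  add_zero X := by ext <;> simp
  add_comm X Y := by ext <;> simp [add_comm]
  neg_add_cancel X := by ext <;> simp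
  nsmul := nsmulRec
  zsmul := zsmulRec

section Central

variable [Fact (s ∈ Set.center R)]

lemma scomm (r : R) : r * s = s * r := Semigroup.mem_center_iff.mp Fact.out r

lemma sshift (r t : R) : r * (s * t) = s * (r * t) := by
  rw [← mul_assoc, scomm (s := s), mul_assoc]

instance : Ring (GenMatrix R s) where
  __ := (inferInstance : AddCommGroup (GenMatrix R s))
  left_distrib X Y Z := by ext <;> simp [mul_add, add_mul] <;> abel
  right_distrib X Y Z := by ext <;> simp [mul_add, add_mul] <;> abel
  zero_mul X := by ext <;> simp
  mul_zero X := by ext <;> simp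
  mul_assoc X Y Z := by
    ext <;> simp only [mul_a, mul_b, mul_c, mul_d, mul_add, add_mul, mul_assoc, sshift] <;> abel
  one_mul X := by ext <;> simp
  mul_one X := by ext <;> simp

end Central

instance central_of_comm {R : Type*} [CommRing R] (s : R) : Fact (s ∈ Set.center R) :=
  ⟨by rw [Set.center_eq_univ]; trivial⟩

/-- `det_s` of a generalized matrix over a commutative ring. -/
def dets {R : Type*} {s : R} [CommRing R] (A : GenMatrix R s) : R :=
  A.a * A.d - s * (A.b * A.c)

/-- The trace of a generalized matrix. -/
def tr {R : Type*} {s : R} [Ring R] (A : GenMatrix R s) : R := A.a + A.d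

end GenMatrix

/-- An element `a` is quasinilpotent if `1 + a*x` is a unit for every `x` commuting with `a`. -/
def IsQuasinilpotent {R : Type*} [Ring R] (a : R) : Prop :=
  ∀ x : R, a * x = x * a → IsUnit (1 + a * x)

/-- An element `a` is quasipolar if there is an idempotent `p` in the double commutant of `a`
with `a + p` a unit and `a * p` quasinilpotent. -/
def IsQuasipolar {R : Type*} [Ring R] (a : R) : Prop :=
  ∃ p : R, IsIdempotentElem p ∧ (∀ y : R, y * a = a * y → p * y = y * p) ∧
    IsUnit (a + p) ∧ IsQuasinilpotent (a * p)

/-- A ring is quasipolar if every element is quasipolar. -/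
def IsQuasipolarRing (R : Type*) [Ring R] : Prop := ∀ a : R, IsQuasipolar a

/-- An element is strongly clean if it is the sum of an idempotent and a unit that commute. -/
def IsStronglyClean {R : Type*} [Ring R] (a : R) : Prop :=
  ∃ e u : R, IsIdempotentElem e ∧ IsUnit u ∧ a = e + u ∧ e * u = u * e

/-- A ring is strongly clean if every element is strongly clean. -/
def IsStronglyCleanRing (R : Type*) [Ring R] : Prop := ∀ a : R, IsStronglyClean a

/-- `a` is similar to `b` if `b = u⁻¹ * a * u` for some unit `u`. -/
def IsSimilar {R : Type*} [Ring R] (a b : R) : Prop :=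
  ∃ u : Rˣ, b = ↑u⁻¹ * a * ↑u

/-- The Jacobson radical of a ring: the intersection of all maximal left ideals. -/
def JacobsonRadical (R : Type*) [Ring R] : Ideal R := Ideal.jacobson ⊥



section Aux

open IsLocalRing

namespace GenMatrix

variable {R : Type*} [CommRing R] {s : R}

@[simp] lemma sub_a (X Y : GenMatrix R s) : (X - Y).a = X.a - Y.a := by
  rw [sub_eq_add_neg, add_a, neg_a, ← sub_eq_add_neg]
@[simp] lemma sub_b (X Y : GenMatrix R s) : (X - Y).b = X.b - Y.b := by
  rw [sub_eq_add_neg, add_b, neg_b, ← sub_eq_add_neg]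
@[simp] lemma sub_c (X Y : GenMatrix R s) : (X - Y).c = X.c - Y.c := by
  rw [sub_eq_add_neg, add_c, neg_c, ← sub_eq_add_neg]
@[simp] lemma sub_d (X Y : GenMatrix R s) : (X - Y).d = X.d - Y.d := by
  rw [sub_eq_add_neg, add_d, neg_d, ← sub_eq_add_neg]

/-- scalar matrix -/
def scalM (r : R) : GenMatrix R s := ⟨r, 0, 0, r⟩

@[simp] lemma scalM_a (r : R) : (scalM r : GenMatrix R s).a = r := rfl
@[simp] lemma scalM_b (r : R) : (scalM r : GenMatrix R s).b = 0 := rfl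
@[simp] lemma scalM_c (r : R) : (scalM r : GenMatrix R s).c = 0 := rfl
@[simp] lemma scalM_d (r : R) : (scalM r : GenMatrix R s).d = r := rfl

lemma scalM_comm (r : R) (X : GenMatrix R s) : scalM r * X = X * scalM r := by
  ext <;> simp <;> ring

lemma dets_mul (X Y : GenMatrix R s) : dets (X * Y) = dets X * dets Y := by
  simp [dets]; ring

lemma dets_one : dets (1 : GenMatrix R s) = 1 := by simp [dets]

lemma isUnit_of_isUnit_dets {X : GenMatrix R s} (h : IsUnit (dets X)) : IsUnit X := by
  obtain ⟨v, hv⟩ := h.exists_right_inv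
  have hv' : (X.a * X.d - s * (X.b * X.c)) * v = 1 := hv
  refine isUnit_iff_exists.mpr ⟨⟨v * X.d, -(v * X.b), -(v * X.c), v * X.a⟩, ?_, ?_⟩ <;>
    ext <;> simp <;>
    first
      | ring1
      | linear_combination hv'
      | linear_combination -hv'
      | linear_combination 2 * hv'
      | linear_combination -2 * hv'

lemma isUnit_dets_of_isUnit {X : GenMatrix R s} (h : IsUnit X) : IsUnit (dets X) := by
  obtain ⟨Y, hY⟩ := h.exists_right_inv
  exact IsUnit.of_mul_eq_one (dets Y) (by rw [← dets_mul, hY, dets_one])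

/-- all entries lie in the ideal `I` -/
def EIn (I : Ideal R) (X : GenMatrix R s) : Prop := X.a ∈ I ∧ X.b ∈ I ∧ X.c ∈ I ∧ X.d ∈ I

lemma EIn.mul_right {I : Ideal R} {X : GenMatrix R s} (h : EIn I X) (Y : GenMatrix R s) :
    EIn I (X * Y) := by
  obtain ⟨h1, h2, h3, h4⟩ := h
  exact ⟨I.add_mem (I.mul_mem_right _ h1) (I.mul_mem_left _ (I.mul_mem_right _ h2)),
    I.add_mem (I.mul_mem_right _ h1) (I.mul_mem_right _ h2),
    I.add_mem (I.mul_mem_right _ h3) (I.mul_mem_right _ h4),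
    I.add_mem (I.mul_mem_left _ (I.mul_mem_right _ h3)) (I.mul_mem_right _ h4)⟩

lemma EIn.neg {I : Ideal R} {X : GenMatrix R s} (h : EIn I X) : EIn I (-X) :=
  ⟨I.neg_mem h.1, I.neg_mem h.2.1, I.neg_mem h.2.2.1, I.neg_mem h.2.2.2⟩

lemma scalM_EIn {I : Ideal R} {r : R} (hr : r ∈ I) (X : GenMatrix R s) :
    EIn I (scalM r * X) := by
  refine ⟨?_, ?_, ?_, ?_⟩ <;>
    simp only [mul_a, mul_b, mul_c, mul_d, scalM_a, scalM_b, scalM_c, scalM_d,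
      zero_mul, mul_zero, add_zero, zero_add] <;>
    exact Ideal.mul_mem_right _ _ hr

end GenMatrix

variable {R : Type*} [CommRing R] [IsLocalRing R]

lemma mem_mI_of_not_isUnit {r : R} (h : ¬IsUnit r) : r ∈ maximalIdeal R := by
  rwa [mem_maximalIdeal, mem_nonunits_iff]

lemma not_isUnit_of_mem_mI {r : R} (h : r ∈ maximalIdeal R) : ¬IsUnit r := by
  rw [mem_maximalIdeal, mem_nonunits_iff] at h; exact h

lemma isUnit_one_add_mem {r : R} (h : r ∈ maximalIdeal R) : IsUnit (1 + r) := by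
  by_contra hc
  have h1 : (1 : R) ∈ maximalIdeal R := by
    have := (maximalIdeal R).sub_mem (mem_mI_of_not_isUnit hc) h
    simpa using this
  exact not_isUnit_of_mem_mI h1 isUnit_one

lemma isUnit_sub_mem {b a : R} (hb : IsUnit b) (ha : a ∈ maximalIdeal R) : IsUnit (b - a) := by
  by_contra hc
  have : b ∈ maximalIdeal R := by
    have := (maximalIdeal R).add_mem (mem_mI_of_not_isUnit hc) ha
    simpa using this
  exact not_isUnit_of_mem_mI this hb

lemma GenMatrix.isUnit_one_add_of_EIn {s : R} {X : GenMatrix R s}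
    (h : GenMatrix.EIn (maximalIdeal R) X) : IsUnit (1 + X) := by
  apply GenMatrix.isUnit_of_isUnit_dets
  have hd : GenMatrix.dets (1 + X) =
      1 + (X.a + X.d + (X.a * X.d - s * (X.b * X.c))) := by
    simp [GenMatrix.dets]; ring
  rw [hd]
  refine isUnit_one_add_mem (Ideal.add_mem _ (Ideal.add_mem _ h.1 h.2.2.2) ?_)
  exact Ideal.sub_mem _ (Ideal.mul_mem_right _ _ h.1)
    (Ideal.mul_mem_left _ _ (Ideal.mul_mem_right _ _ h.2.1))

/-- quasipolar elements are strongly clean, in any ring -/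
lemma isStronglyClean_of_isQuasipolar {S : Type*} [Ring S] {a : S}
    (h : IsQuasipolar a) : IsStronglyClean a := by
  obtain ⟨p, hp, hcomm, hu, hq⟩ := h
  have hpa : Commute a p := (hcomm a rfl).symm
  have hg : IsUnit (1 - a * p) := by
    have hcp : a * p * (-p) = -p * (a * p) := by
      simp only [mul_neg, neg_mul, neg_inj]
      rw [mul_assoc, hp, ← mul_assoc, ← hpa.eq, mul_assoc, hp.eq]
    have := hq (-p) hcp
    have he : 1 + a * p * (-p) = 1 - a * p := by
      rw [mul_neg, mul_assoc, hp, ← sub_eq_add_neg]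
    rwa [he] at this
  obtain ⟨v, hv⟩ := hu
  obtain ⟨g, hgv⟩ := hg
  -- commutation facts
  have hav : Commute a ↑v := by rw [hv]; exact (Commute.refl a).add_right hpa
  have hpv : Commute p ↑v := by rw [hv]; exact hpa.symm.add_right (Commute.refl p)
  have hag : Commute a ↑g := by
    rw [hgv]
    exact (Commute.one_right a).sub_right ((Commute.refl a).mul_right hpa)
  have hpg : Commute p ↑g := by
    rw [hgv]
    exact (Commute.one_right p).sub_right (hpa.symm.mul_right (Commute.refl p))
  have hqv : Commute (a - p) (↑v⁻¹ : S) := (hav.sub_left hpv).units_inv_right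
  have hqg : Commute (a - p) (↑g⁻¹ : S) := (hag.sub_left hpg).units_inv_right
  have hq1p : Commute (a - p) (1 - p) :=
    ((Commute.one_right a).sub_right hpa).sub_left ((Commute.one_right p).sub_right (Commute.refl p))
  have hqp : Commute (a - p) p := hpa.sub_left (Commute.refl p)
  -- key identities
  have key1 : (a - p) * (1 - p) = ↑v * (1 - p) := by
    rw [hv]
    simp only [sub_mul, add_mul, mul_sub, mul_one, hp.eq]
    abel
  have key2 : (a - p) * p = -(↑g * p) := by
    rw [hgv]
    simp only [sub_mul, one_mul, mul_assoc, hp.eq]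
    abel
  have swap : ∀ (u x y : S), Commute x u → x * (u * y) = u * (x * y) := fun u x y h => by
    rw [← mul_assoc, h.eq, mul_assoc]
  have I1 : (a - p) * (↑v⁻¹ * (1 - p)) = 1 - p := by
    calc (a - p) * (↑v⁻¹ * (1 - p)) = ↑v⁻¹ * ((a - p) * (1 - p)) := swap _ _ _ hqv
      _ = ↑v⁻¹ * (↑v * (1 - p)) := by rw [key1]
      _ = 1 - p := by rw [← mul_assoc, Units.inv_mul, one_mul]
  have I2 : (a - p) * (↑g⁻¹ * p) = -p := by
    calc (a - p) * (↑g⁻¹ * p) = ↑g⁻¹ * ((a - p) * p) := swap _ _ _ hqg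
      _ = ↑g⁻¹ * (-(↑g * p)) := by rw [key2]
      _ = -p := by rw [mul_neg, ← mul_assoc, Units.inv_mul, one_mul]
  have J1 : (↑v⁻¹ * (1 - p)) * (a - p) = 1 - p := by
    calc (↑v⁻¹ * (1 - p)) * (a - p) = ↑v⁻¹ * ((1 - p) * (a - p)) := mul_assoc _ _ _
      _ = ↑v⁻¹ * ((a - p) * (1 - p)) := by rw [← hq1p.eq]
      _ = ↑v⁻¹ * (↑v * (1 - p)) := by rw [key1]
      _ = 1 - p := by rw [← mul_assoc, Units.inv_mul, one_mul]
  have J2 : (↑g⁻¹ * p) * (a - p) = -p := by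
    calc (↑g⁻¹ * p) * (a - p) = ↑g⁻¹ * (p * (a - p)) := mul_assoc _ _ _
      _ = ↑g⁻¹ * ((a - p) * p) := by rw [← hqp.eq]
      _ = ↑g⁻¹ * (-(↑g * p)) := by rw [key2]
      _ = -p := by rw [mul_neg, ← mul_assoc, Units.inv_mul, one_mul]
  have hru : IsUnit (a - p) := by
    refine isUnit_iff_exists.mpr ⟨↑v⁻¹ * (1 - p) - ↑g⁻¹ * p, ?_, ?_⟩
    · rw [mul_sub, I1, I2]; abel
    · rw [sub_mul, J1, J2]; abel
  exact ⟨p, a - p, hp, hru, by abel, by rw [mul_sub, sub_mul, hp, hpa.eq]⟩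

end Aux

/-- over a commutative local ring `R` with `s` a unit, `K_s(R)` is quasipolar
iff `K_s(R)` is strongly clean. -/
theorem genMatrix_isQuasipolarRing_iff_isStronglyCleanRing {R : Type*} [CommRing R]
    [IsLocalRing R] (s : R) (hs : IsUnit s) :
    IsQuasipolarRing (GenMatrix R s) ↔ IsStronglyCleanRing (GenMatrix R s) := by
  constructor
  · intro h A
    exact isStronglyClean_of_isQuasipolar (h A)
  · intro hsc A
    have hprime := (IsLocalRing.maximalIdeal.isMaximal R).isPrime
    by_cases hd : IsUnit (GenMatrix.dets A)
    · -- A is a unit; take p = 0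
      refine ⟨0, IsIdempotentElem.zero, fun y _ => by simp, ?_, ?_⟩
      · simpa using GenMatrix.isUnit_of_isUnit_dets hd
      · intro x _; simpa using isUnit_one
    · have hdm : A.a * A.d - s * (A.b * A.c) ∈ IsLocalRing.maximalIdeal R :=
        mem_mI_of_not_isUnit hd
      by_cases ht : IsUnit (A.a + A.d)
      · -- hard case: trace a unit, dets in the maximal ideal
        obtain ⟨ti, hti⟩ := ht.exists_right_inv
        obtain ⟨si, hsi⟩ := hs.exists_right_inv
        set d' := (A.a * A.d - s * (A.b * A.c)) * (ti * ti) with hd'def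
        have hd'm : d' ∈ IsLocalRing.maximalIdeal R := Ideal.mul_mem_right _ _ hdm
        obtain ⟨E, U, hE, hU, hBEU, hEU⟩ := hsc ⟨0, 1, -(si * d'), 1⟩
        set B : GenMatrix R s := ⟨0, 1, -(si * d'), 1⟩ with hBdef
        have hEE : E * E = E := hE
        have hdetsB : GenMatrix.dets B = d' := by
          show (0:R) * 1 - s * (1 * -(si * d')) = d'
          linear_combination d' * hsi
        have hBE : B * E = E * B := by
          have h1 : B * E = E * E + U * E := by rw [hBEU, add_mul]
          have h2 : E * B = E * E + E * U := by rw [hBEU, mul_add]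
          rw [h1, h2, hEU]
        have ca : (0:R) * E.a + s * (1 * E.c) = E.a * 0 + s * (E.b * -(si * d')) :=
          congrArg GenMatrix.a hBE
        have cb : (0:R) * E.b + 1 * E.d = E.a * 1 + E.b * 1 :=
          congrArg GenMatrix.b hBE
        have hc : s * E.c = s * (-(si * d') * E.b) := by linear_combination ca
        have hcE : E.c = -(si * d') * E.b := hs.mul_left_cancel hc
        have hd4 : E.d = E.a + E.b := by linear_combination cb
        have ia : E.a * E.a + s * (E.b * E.c) = E.a := congrArg GenMatrix.a hEE
        have ib : E.a * E.b + E.b * E.d = E.b := congrArg GenMatrix.b hEE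
        have h1 : E.a ^ 2 - d' * E.b ^ 2 = E.a := by
          linear_combination ia - s * E.b * hcE + E.b ^ 2 * d' * hsi
        have h2 : 2 * (E.a * E.b) + E.b ^ 2 = E.b := by
          linear_combination ib - E.b * hd4
        -- E.b must be a unit
        have hEb : IsUnit E.b := by
          by_contra hb
          have hbm : E.b ∈ IsLocalRing.maximalIdeal R := mem_mI_of_not_isUnit hb
          have hfac : E.a * (E.a - 1) ∈ IsLocalRing.maximalIdeal R := by
            have hfe : E.a * (E.a - 1) = d' * E.b ^ 2 := by linear_combination h1
            rw [hfe]; exact Ideal.mul_mem_right _ _ hd'm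
          have hz : E.b * (2 * E.a + E.b - 1) = E.b * 0 := by
            rw [mul_zero]; linear_combination h2
          rcases hprime.mem_or_mem hfac with ham | ham1
          · -- E.a ∈ m, leads to E = 0, so B is a unit: contradiction
            have hu2 : IsUnit (2 * E.a + E.b - 1) := by
              have h5 : IsUnit (1 - (2 * E.a + E.b)) :=
                isUnit_sub_mem isUnit_one
                  (Ideal.add_mem _ (Ideal.mul_mem_left _ _ ham) hbm)
              have h6 := h5.neg
              rwa [neg_sub] at h6
            have hb0 : E.b = 0 := by
              obtain ⟨w, hw⟩ := hu2.exists_right_inv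
              calc E.b = E.b * ((2 * E.a + E.b - 1) * w) := by rw [hw, mul_one]
                _ = (E.b * (2 * E.a + E.b - 1)) * w := by ring
                _ = 0 := by rw [hz]; ring
            have hzz : E.a * (E.a - 1) = 0 := by
              have hfe : E.a * (E.a - 1) = d' * E.b ^ 2 := by linear_combination h1
              rw [hfe, hb0]; ring
            have hu3 : IsUnit (E.a - 1) := by
              have h5 := (isUnit_sub_mem isUnit_one ham).neg
              rwa [neg_sub] at h5
            have ha0 : E.a = 0 := by
              obtain ⟨w, hw⟩ := hu3.exists_right_inv
              calc E.a = E.a * ((E.a - 1) * w) := by rw [hw, mul_one]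
                _ = (E.a * (E.a - 1)) * w := by ring
                _ = 0 := by rw [hzz, zero_mul]
            have hE0 : E = 0 := by
              ext <;> simp [ha0, hb0, hcE, hd4]
            have hBU : IsUnit B := by
              rw [hBEU, hE0, zero_add]; exact hU
            exact not_isUnit_of_mem_mI hd'm
              (hdetsB ▸ GenMatrix.isUnit_dets_of_isUnit hBU)
          · -- E.a - 1 ∈ m, leads to E = 1, so B - 1 is a unit: contradiction
            have hu2 : IsUnit (2 * E.a + E.b - 1) := by
              have he9 : 2 * E.a + E.b - 1 = 1 + (2 * (E.a - 1) + E.b) := by ring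
              rw [he9]
              exact isUnit_one_add_mem
                (Ideal.add_mem _ (Ideal.mul_mem_left _ _ ham1) hbm)
            have hb0 : E.b = 0 := by
              obtain ⟨w, hw⟩ := hu2.exists_right_inv
              calc E.b = E.b * ((2 * E.a + E.b - 1) * w) := by rw [hw, mul_one]
                _ = (E.b * (2 * E.a + E.b - 1)) * w := by ring
                _ = 0 := by rw [hz]; ring
            have hzz : E.a * (E.a - 1) = 0 := by
              have hfe : E.a * (E.a - 1) = d' * E.b ^ 2 := by linear_combination h1
              rw [hfe, hb0]; ring
            have hu3 : IsUnit E.a := by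
              have he9 : E.a = 1 + (E.a - 1) := by ring
              rw [he9]; exact isUnit_one_add_mem ham1
            have ha1 : E.a = 1 := by
              obtain ⟨w, hw⟩ := hu3.exists_right_inv
              have h9 : E.a - 1 = 0 := by
                calc E.a - 1 = (E.a * w) * (E.a - 1) := by rw [hw, one_mul]
                  _ = w * (E.a * (E.a - 1)) := by ring
                  _ = 0 := by rw [hzz, mul_zero]
              linear_combination h9
            have hE1 : E = 1 := by
              ext <;> simp [ha1, hb0, hcE, hd4]
            have hBU : IsUnit (B - 1) := by
              have h7 : B - 1 = U := by rw [hBEU, hE1]; abel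
              rw [h7]; exact hU
            have hdB1 : GenMatrix.dets (B - 1) = d' := by
              have h7 : GenMatrix.dets (B - 1) =
                  (B.a - 1) * (B.d - 1) - s * ((B.b - 0) * (B.c - 0)) := by
                simp [GenMatrix.dets]
              rw [h7]
              show ((0:R) - 1) * (1 - 1) - s * ((1 - 0) * (-(si * d') - 0)) = d'
              linear_combination d' * hsi
            exact not_isUnit_of_mem_mI hd'm
              (hdB1 ▸ GenMatrix.isUnit_dets_of_isUnit hBU)
        -- extract the root
        have h3 : 2 * E.a + E.b - 1 = 0 := by
          have hz : E.b * (2 * E.a + E.b - 1) = E.b * 0 := by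
            rw [mul_zero]; linear_combination h2
          exact hEb.mul_left_cancel hz
        have h1' : E.a ^ 2 - d' * (1 - 2 * E.a) ^ 2 = E.a := by
          linear_combination h1 + d' * (E.b + 1 - 2 * E.a) * h3
        have hx : (E.a + (1 - 2 * E.a) * (1 - 2 * d')) ^ 2
            - (E.a + (1 - 2 * E.a) * (1 - 2 * d')) + d' = 0 := by
          linear_combination (1 - 4 * d') * h1'
        obtain ⟨y, hym, hy⟩ : ∃ y, y ∈ IsLocalRing.maximalIdeal R ∧ y ^ 2 - y + d' = 0 := by
          set x := E.a + (1 - 2 * E.a) * (1 - 2 * d') with hxdef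
          have hxx : x * (x - 1) ∈ IsLocalRing.maximalIdeal R := by
            have h7 : x * (x - 1) = -d' := by linear_combination hx
            rw [h7]; exact neg_mem hd'm
          rcases hprime.mem_or_mem hxx with h | h
          · exact ⟨x, h, hx⟩
          · refine ⟨1 - x, ?_, by linear_combination hx⟩
            have h8 := neg_mem h
            rwa [neg_sub] at h8
        -- the two roots of z^2 - t z + d
        set t := A.a + A.d with htdef
        set dd := A.a * A.d - s * (A.b * A.c) with hdddef
        set α := t * y with hαdef
        set β := t * (1 - y) with hβdef
        have hαm : α ∈ IsLocalRing.maximalIdeal R := Ideal.mul_mem_left _ _ hym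
        have hβu : IsUnit β := ht.mul (isUnit_sub_mem isUnit_one hym)
        have hsum : α + β = A.a + A.d := by rw [hαdef, hβdef]; ring
        have hprod : α * β = A.a * A.d - s * (A.b * A.c) := by
          rw [hαdef, hβdef]
          linear_combination (-t^2) * hy + t^2 * hd'def + dd * (t * ti + 1) * hti
        have hαβu : IsUnit (α - β) := by
          have h7 := (isUnit_sub_mem hβu hαm).neg
          rwa [neg_sub] at h7
        obtain ⟨l, hl⟩ := hαβu.exists_right_inv
        refine ⟨⟨l * (A.a - β), l * A.b, l * A.c, l * (A.d - β)⟩, ?_, ?_, ?_, ?_⟩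
        · -- idempotent
          show _ * _ = _
          ext
          · show l * (A.a - β) * (l * (A.a - β)) + s * (l * A.b * (l * A.c)) = l * (A.a - β)
            linear_combination (l * (A.a - β)) * hl - (l^2 * A.a) * hsum + l^2 * hprod
          · show l * (A.a - β) * (l * A.b) + l * A.b * (l * (A.d - β)) = l * A.b
            linear_combination (l * A.b) * hl - (l^2 * A.b) * hsum
          · show l * A.c * (l * (A.a - β)) + l * (A.d - β) * (l * A.c) = l * A.c
            linear_combination (l * A.c) * hl - (l^2 * A.c) * hsum
          · show s * (l * A.c * (l * A.b)) + l * (A.d - β) * (l * (A.d - β)) = l * (A.d - β)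
            linear_combination (l * (A.d - β)) * hl - (l^2 * A.d) * hsum + l^2 * hprod
        · -- commutes with the commutant of A
          intro y hy2
          have hPe : (⟨l * (A.a - β), l * A.b, l * A.c, l * (A.d - β)⟩ : GenMatrix R s)
              = GenMatrix.scalM l * A - GenMatrix.scalM (l * β) := by
            ext <;> simp [GenMatrix.scalM] <;> ring
          rw [hPe]
          calc (GenMatrix.scalM l * A - GenMatrix.scalM (l * β)) * y
              = GenMatrix.scalM l * A * y - GenMatrix.scalM (l * β) * y := by rw [sub_mul]
            _ = GenMatrix.scalM l * (y * A) - y * GenMatrix.scalM (l * β) := by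
                rw [mul_assoc, ← hy2, GenMatrix.scalM_comm (l * β) y]
            _ = (GenMatrix.scalM l * y) * A - y * GenMatrix.scalM (l * β) := by
                rw [← mul_assoc]
            _ = y * (GenMatrix.scalM l * A) - y * GenMatrix.scalM (l * β) := by
                rw [GenMatrix.scalM_comm l y, mul_assoc]
            _ = y * (GenMatrix.scalM l * A - GenMatrix.scalM (l * β)) := by rw [mul_sub]
        · -- A + p is a unit
          apply GenMatrix.isUnit_of_isUnit_dets
          have hdAP : GenMatrix.dets
              (A + ⟨l * (A.a - β), l * A.b, l * A.c, l * (A.d - β)⟩) = (1 + α) * β := by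
            show (A.a + l * (A.a - β)) * (A.d + l * (A.d - β))
                - s * ((A.b + l * A.b) * (A.c + l * A.c)) = (1 + α) * β
            linear_combination β * hl - (1 + l)^2 * hprod + (1 + l) * l * β * hsum
          rw [hdAP]
          exact (isUnit_one_add_mem hαm).mul hβu
        · -- A * p is quasinilpotent
          have hAP : A * ⟨l * (A.a - β), l * A.b, l * A.c, l * (A.d - β)⟩
              = GenMatrix.scalM α * ⟨l * (A.a - β), l * A.b, l * A.c, l * (A.d - β)⟩ := by
            ext
            · show A.a * (l * (A.a - β)) + s * (A.b * (l * A.c))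
                  = α * (l * (A.a - β)) + s * (0 * (l * A.c))
              linear_combination -(l * A.a) * hsum + l * hprod
            · show A.a * (l * A.b) + A.b * (l * (A.d - β))
                  = α * (l * A.b) + 0 * (l * (A.d - β))
              linear_combination -(l * A.b) * hsum
            · show A.c * (l * (A.a - β)) + A.d * (l * A.c)
                  = 0 * (l * (A.a - β)) + α * (l * A.c)
              linear_combination -(l * A.c) * hsum
            · show s * (A.c * (l * A.b)) + A.d * (l * (A.d - β))
                  = s * (0 * (l * A.b)) + α * (l * (A.d - β))
              linear_combination -(l * A.d) * hsum + l * hprod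
          intro x _
          rw [hAP]
          apply GenMatrix.isUnit_one_add_of_EIn
          exact GenMatrix.EIn.mul_right (GenMatrix.scalM_EIn hαm _) x
      · -- trace and dets both in the maximal ideal: p = 1
        have htm : A.a + A.d ∈ IsLocalRing.maximalIdeal R := mem_mI_of_not_isUnit ht
        refine ⟨1, IsIdempotentElem.one, fun y _ => by rw [one_mul, mul_one], ?_, ?_⟩
        · apply GenMatrix.isUnit_of_isUnit_dets
          have h7 : GenMatrix.dets (A + 1) =
              1 + ((A.a + A.d) + (A.a * A.d - s * (A.b * A.c))) := by
            simp [GenMatrix.dets]; ring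
          rw [h7]
          exact isUnit_one_add_mem (Ideal.add_mem _ htm hdm)
        · rw [mul_one]
          intro x hx
          have hAA : GenMatrix.EIn (IsLocalRing.maximalIdeal R) (A * A) := by
            refine ⟨?_, ?_, ?_, ?_⟩
            · have h7 : (A * A).a = (A.a + A.d) * A.a - (A.a * A.d - s * (A.b * A.c)) := by
                simp; ring
              rw [h7]; exact Ideal.sub_mem _ (Ideal.mul_mem_right _ _ htm) hdm
            · have h7 : (A * A).b = (A.a + A.d) * A.b := by simp; ring
              rw [h7]; exact Ideal.mul_mem_right _ _ htm
            · have h7 : (A * A).c = (A.a + A.d) * A.c := by simp; ring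
              rw [h7]; exact Ideal.mul_mem_right _ _ htm
            · have h7 : (A * A).d = (A.a + A.d) * A.d - (A.a * A.d - s * (A.b * A.c)) := by
                simp; ring
              rw [h7]; exact Ideal.sub_mem _ (Ideal.mul_mem_right _ _ htm) hdm
          have hsq : (A * x) * (A * x) = (A * A) * (x * x) := by
            calc (A * x) * (A * x) = A * ((x * A) * x) := by
                  rw [mul_assoc, ← mul_assoc x A x]
              _ = A * ((A * x) * x) := by rw [← hx]
              _ = (A * A) * (x * x) := by rw [mul_assoc A x x, ← mul_assoc]
          have hu1 : IsUnit (GenMatrix.dets (1 + A * x) * GenMatrix.dets (1 - A * x)) := by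
            rw [← GenMatrix.dets_mul]
            have he : (1 + A * x) * (1 - A * x) = 1 + -((A * A) * (x * x)) := by
              rw [← hsq]; noncomm_ring
            rw [he]
            exact GenMatrix.isUnit_dets_of_isUnit
              (GenMatrix.isUnit_one_add_of_EIn ((hAA.mul_right (x * x)).neg))
          exact GenMatrix.isUnit_of_isUnit_dets (isUnit_of_mul_isUnit_left hu1)
end

section
/- Let p be a prime and let R = ℤ_p be the ring of p-adic integers. Then for every s ∈ R, the generalized matrix ring K_s(R) is quasipolar. -/
section PadicAux

variable {p : ℕ} [Fact p.Prime]

lemma padicAux_small_add {x y : ℤ_[p]} (hx : ‖x‖ < 1) (hy : ‖y‖ < 1) : ‖x + y‖ < 1 :=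
  lt_of_le_of_lt (PadicInt.nonarchimedean x y) (max_lt hx hy)

lemma padicAux_small_mul_left {x : ℤ_[p]} (y : ℤ_[p]) (hx : ‖x‖ < 1) : ‖x * y‖ < 1 := by
  rw [norm_mul]
  calc ‖x‖ * ‖y‖ ≤ ‖x‖ * 1 := mul_le_mul_of_nonneg_left (PadicInt.norm_le_one y) (norm_nonneg x)
    _ = ‖x‖ := mul_one _
    _ < 1 := hx

lemma padicAux_small_mul_right (x : ℤ_[p]) {y : ℤ_[p]} (hy : ‖y‖ < 1) : ‖x * y‖ < 1 := by
  rw [mul_comm]; exact padicAux_small_mul_left x hy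

lemma padicAux_small_sub {x y : ℤ_[p]} (hx : ‖x‖ < 1) (hy : ‖y‖ < 1) : ‖x - y‖ < 1 := by
  rw [sub_eq_add_neg]
  exact padicAux_small_add hx (by simpa using hy)

lemma padicAux_norm_add_eq_left {x y : ℤ_[p]} (h : ‖y‖ < ‖x‖) : ‖x + y‖ = ‖x‖ := by
  refine le_antisymm ((PadicInt.nonarchimedean x y).trans (max_le le_rfl h.le)) ?_
  have h2 : ‖x‖ ≤ max ‖x + y‖ ‖-y‖ := by
    simpa using PadicInt.nonarchimedean (x + y) (-y)
  rw [norm_neg] at h2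
  rcases max_cases ‖x + y‖ ‖y‖ with ⟨he, _⟩ | ⟨he, _⟩ <;> rw [he] at h2
  · exact h2
  · linarith

lemma padicAux_norm_one_add {x : ℤ_[p]} (hx : ‖x‖ < 1) : ‖1 + x‖ = 1 := by
  have := padicAux_norm_add_eq_left (x := (1 : ℤ_[p])) (y := x) (by simpa using hx)
  simpa using this

lemma padicAux_isUnit_one_add {x : ℤ_[p]} (hx : ‖x‖ < 1) : IsUnit (1 + x) :=
  PadicInt.isUnit_iff.mpr (padicAux_norm_one_add hx)

end PadicAux

namespace GenMatrix

lemma padicAux_dets_mul {R : Type*} [CommRing R] {s : R} (X Y : GenMatrix R s) :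
    dets (X * Y) = dets X * dets Y := by
  simp only [dets, mul_a, mul_b, mul_c, mul_d]; ring

lemma padicAux_isUnit_of_isUnit_dets {R : Type*} [CommRing R] {s : R} (A : GenMatrix R s)
    (h : IsUnit (dets A)) : IsUnit A := by
  obtain ⟨u, hu⟩ := h
  have hv : (↑u⁻¹ : R) * (A.a * A.d - s * (A.b * A.c)) = 1 := by
    rw [show A.a * A.d - s * (A.b * A.c) = dets A from rfl, ← hu]; exact u.inv_mul
  refine isUnit_iff_exists.mpr
    ⟨⟨(↑u⁻¹ : R) * A.d, -((↑u⁻¹ : R) * A.b), -((↑u⁻¹ : R) * A.c), (↑u⁻¹ : R) * A.a⟩, ?_, ?_⟩ <;>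
    · ext <;> simp only [mul_a, mul_b, mul_c, mul_d, one_a, one_b, one_c, one_d] <;>
        first
        | ring1
        | linear_combination hv

section Padic

variable {p : ℕ} [Fact p.Prime] {s : ℤ_[p]}

lemma padicAux_isUnit_one_add_matrix (B : GenMatrix ℤ_[p] s)
    (ht : ‖tr B‖ < 1) (hd : ‖dets B‖ < 1) : IsUnit ((1 : GenMatrix ℤ_[p] s) + B) := by
  apply padicAux_isUnit_of_isUnit_dets
  have h : dets ((1 : GenMatrix ℤ_[p] s) + B) = 1 + (tr B + dets B) := by
    simp only [dets, tr, add_a, add_b, add_c, add_d, one_a, one_b, one_c, one_d]; ring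
  rw [h]
  exact padicAux_isUnit_one_add (padicAux_small_add ht hd)

lemma padicAux_isUnit_one_add_of_entries (B : GenMatrix ℤ_[p] s)
    (h1 : ‖B.a‖ < 1) (h2 : ‖B.b‖ < 1) (h3 : ‖B.c‖ < 1) (h4 : ‖B.d‖ < 1) :
    IsUnit ((1 : GenMatrix ℤ_[p] s) + B) := by
  apply padicAux_isUnit_one_add_matrix
  · exact padicAux_small_add h1 h4
  · exact padicAux_small_sub (padicAux_small_mul_left _ h1)
      (padicAux_small_mul_right _ (padicAux_small_mul_left _ h2))

lemma padicAux_isQuasinilpotent_of_small (B : GenMatrix ℤ_[p] s)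
    (h1 : ‖B.a‖ < 1) (h2 : ‖B.b‖ < 1) (h3 : ‖B.c‖ < 1) (h4 : ‖B.d‖ < 1) :
    IsQuasinilpotent B := by
  intro X _
  apply padicAux_isUnit_one_add_of_entries <;>
    simp only [mul_a, mul_b, mul_c, mul_d]
  · exact padicAux_small_add (padicAux_small_mul_left _ h1)
      (padicAux_small_mul_right _ (padicAux_small_mul_left _ h2))
  · exact padicAux_small_add (padicAux_small_mul_left _ h1) (padicAux_small_mul_left _ h2)
  · exact padicAux_small_add (padicAux_small_mul_left _ h3) (padicAux_small_mul_left _ h4)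
  · exact padicAux_small_add (padicAux_small_mul_right _ (padicAux_small_mul_left _ h3))
      (padicAux_small_mul_left _ h4)

lemma padicAux_tr_mul_small (A X : GenMatrix ℤ_[p] s)
    (ht : ‖tr A‖ < 1) (hδ : ‖dets A‖ < 1) (hcomm : A * X = X * A) :
    ‖tr (A * X)‖ < 1 := by
  -- entries of A*A are small
  have hAAa : ‖(A * A).a‖ < 1 := by
    have h : (A * A).a = tr A * A.a - dets A := by
      simp only [mul_a, tr, dets]; ring
    rw [h]
    exact padicAux_small_sub (padicAux_small_mul_left _ ht) hδ
  have hAAb : ‖(A * A).b‖ < 1 := by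
    have h : (A * A).b = tr A * A.b := by simp only [mul_b, tr]; ring
    rw [h]; exact padicAux_small_mul_left _ ht
  have hAAc : ‖(A * A).c‖ < 1 := by
    have h : (A * A).c = tr A * A.c := by simp only [mul_c, tr]; ring
    rw [h]; exact padicAux_small_mul_left _ ht
  have hAAd : ‖(A * A).d‖ < 1 := by
    have h : (A * A).d = tr A * A.d - dets A := by
      simp only [mul_d, tr, dets]; ring
    rw [h]
    exact padicAux_small_sub (padicAux_small_mul_left _ ht) hδ
  have hBB : (A * X) * (A * X) = (A * A) * (X * X) := by
    rw [mul_assoc, ← mul_assoc X A X, ← hcomm, mul_assoc A X X, ← mul_assoc, ← mul_assoc]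
  have hBBa : ‖((A * X) * (A * X)).a‖ < 1 := by
    rw [hBB]
    simp only [mul_a]
    exact padicAux_small_add (padicAux_small_mul_left _ hAAa)
      (padicAux_small_mul_right _ (padicAux_small_mul_left _ hAAb))
  have hBBd : ‖((A * X) * (A * X)).d‖ < 1 := by
    rw [hBB]
    simp only [mul_d]
    exact padicAux_small_add (padicAux_small_mul_right _ (padicAux_small_mul_left _ hAAc))
      (padicAux_small_mul_left _ hAAd)
  have hdB : ‖dets (A * X)‖ < 1 := by
    rw [padicAux_dets_mul]; exact padicAux_small_mul_left _ hδ
  have hkey : tr (A * X) * tr (A * X)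
      = ((A * X) * (A * X)).a + ((A * X) * (A * X)).d + 2 * dets (A * X) := by
    simp only [tr, dets, mul_a, mul_b, mul_c, mul_d]; ring
  have hsq : ‖tr (A * X) * tr (A * X)‖ < 1 := by
    rw [hkey]
    exact padicAux_small_add (padicAux_small_add hBBa hBBd)
      (padicAux_small_mul_right _ hdB)
  rw [norm_mul] at hsq
  nlinarith [PadicInt.norm_le_one (tr (A * X)), norm_nonneg (tr (A * X))]

end Padic

end GenMatrix

/-- for a prime `p` and the ring `ℤ_p` of `p`-adic integers, `K_s(ℤ_p)` is
quasipolar for every `s ∈ ℤ_p`. -/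
theorem genMatrix_padicInt_isQuasipolarRing (p : ℕ) [Fact p.Prime] (s : PadicInt p) :
    IsQuasipolarRing (GenMatrix (PadicInt p) s) := by
  intro A
  by_cases hδ : ‖GenMatrix.dets A‖ = 1
  · -- Case 1: `dets A` is a unit, hence `A` is a unit; take the idempotent `0`.
    refine ⟨0, by simp [IsIdempotentElem], fun y _ => by rw [zero_mul, mul_zero], ?_, ?_⟩
    · rw [add_zero]
      exact GenMatrix.padicAux_isUnit_of_isUnit_dets A (PadicInt.isUnit_iff.mpr hδ)
    · rw [mul_zero]
      intro x _
      simpa using isUnit_one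
  · have hδ' : ‖GenMatrix.dets A‖ < 1 :=
      lt_of_le_of_ne (PadicInt.norm_le_one _) hδ
    by_cases ht : ‖GenMatrix.tr A‖ < 1
    · -- Case 2: trace and determinant both topologically nilpotent; take the idempotent `1`.
      refine ⟨1, by simp [IsIdempotentElem], fun y _ => by rw [one_mul, mul_one], ?_, ?_⟩
      · rw [add_comm]
        exact GenMatrix.padicAux_isUnit_one_add_matrix A ht hδ'
      · rw [mul_one]
        intro X hX
        exact GenMatrix.padicAux_isUnit_one_add_matrix (A * X)
          (GenMatrix.padicAux_tr_mul_small A X ht hδ' hX)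
          (by rw [GenMatrix.padicAux_dets_mul]; exact padicAux_small_mul_left _ hδ')
    · -- Case 3: trace is a unit, determinant is not; use Hensel's lemma.
      have ht1 : ‖GenMatrix.tr A‖ = 1 := le_antisymm (PadicInt.norm_le_one _) (not_lt.mp ht)
      obtain ⟨β, hβ0, hβsmall⟩ :
          ∃ β : ℤ_[p], β * β - GenMatrix.tr A * β + GenMatrix.dets A = 0 ∧ ‖β‖ < 1 := by
        set t := GenMatrix.tr A
        set δ := GenMatrix.dets A
        set F : Polynomial ℤ_[p] :=
          Polynomial.X ^ 2 - Polynomial.C t * Polynomial.X + Polynomial.C δ with hF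
        have heval0 : F.eval 0 = δ := by simp [hF]
        have hder : F.derivative.eval 0 = -t := by
          simp [hF, Polynomial.derivative_X_pow]
        have hnorm : ‖F.eval 0‖ < ‖F.derivative.eval 0‖ ^ 2 := by
          rw [heval0, hder, norm_neg, ht1]
          simpa using hδ'
        obtain ⟨z, hz1, hz2, -, -⟩ := hensels_lemma hnorm
        rw [Polynomial.coe_aeval_eq_eval] at hz1 hz2
        rw [hder, norm_neg, ht1, sub_zero] at hz2
        refine ⟨z, ?_, hz2⟩
        simp only [hF, Polynomial.eval_add, Polynomial.eval_sub, Polynomial.eval_mul,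
          Polynomial.eval_pow, Polynomial.eval_X, Polynomial.eval_C] at hz1
        linear_combination hz1
      have hβ : β * β - (A.a + A.d) * β + (A.a * A.d - s * (A.b * A.c)) = 0 := by
        simpa only [GenMatrix.tr, GenMatrix.dets] using hβ0
      have hunit : ‖2 * β - (A.a + A.d)‖ = 1 := by
        have e : 2 * β - (A.a + A.d) = -(A.a + A.d) + 2 * β := by ring
        have h2β : ‖2 * β‖ < ‖-(A.a + A.d)‖ := by
          rw [norm_neg, show A.a + A.d = GenMatrix.tr A from rfl, ht1]
          exact padicAux_small_mul_right 2 hβsmall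
        rw [e, padicAux_norm_add_eq_left h2β, norm_neg,
          show A.a + A.d = GenMatrix.tr A from rfl, ht1]
      obtain ⟨w, hw⟩ := PadicInt.isUnit_iff.mpr hunit
      set v : ℤ_[p] := (↑w⁻¹ : ℤ_[p]) with hvdef
      have hv : v * (2 * β - (A.a + A.d)) = 1 := by
        rw [hvdef, ← hw]; exact w.inv_mul
      refine ⟨⟨v * (β - A.d), v * A.b, v * A.c, v * (β - A.a)⟩, ?_, ?_, ?_, ?_⟩
      · -- idempotent
        show _ * _ = _
        ext <;> simp only [GenMatrix.mul_a, GenMatrix.mul_b, GenMatrix.mul_c, GenMatrix.mul_d]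
        · linear_combination (v * (β - A.d)) * hv - v ^ 2 * hβ
        · linear_combination (v * A.b) * hv
        · linear_combination (v * A.c) * hv
        · linear_combination (v * (β - A.a)) * hv - v ^ 2 * hβ
      · -- double commutant
        intro Y hY
        have ha := congrArg GenMatrix.a hY
        have hb := congrArg GenMatrix.b hY
        have hc := congrArg GenMatrix.c hY
        have hd := congrArg GenMatrix.d hY
        simp only [GenMatrix.mul_a, GenMatrix.mul_b, GenMatrix.mul_c, GenMatrix.mul_d]
          at ha hb hc hd
        ext <;> simp only [GenMatrix.mul_a, GenMatrix.mul_b, GenMatrix.mul_c, GenMatrix.mul_d]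
        · first
          | linear_combination (-v) * ha
          | linear_combination v * ha
        · first
          | linear_combination (-v) * hb
          | linear_combination v * hb
        · first
          | linear_combination (-v) * hc
          | linear_combination v * hc
        · first
          | linear_combination (-v) * hd
          | linear_combination v * hd
      · -- A + Q is a unit
        apply GenMatrix.padicAux_isUnit_of_isUnit_dets
        have hdet : GenMatrix.dets
            (A + ⟨v * (β - A.d), v * A.b, v * A.c, v * (β - A.a)⟩)
            = (A.a + A.d - β) * (β + 1) := by
          simp only [GenMatrix.dets, GenMatrix.add_a, GenMatrix.add_b, GenMatrix.add_c,
            GenMatrix.add_d]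
          linear_combination (v ^ 2 + 2 * v + 1) * hβ + (A.a + A.d - β) * hv
        rw [hdet, PadicInt.isUnit_iff, norm_mul]
        have h1 : ‖A.a + A.d - β‖ = 1 := by
          have e : A.a + A.d - β = (A.a + A.d) + (-β) := by ring
          rw [e, padicAux_norm_add_eq_left (by
            rw [norm_neg, show A.a + A.d = GenMatrix.tr A from rfl, ht1]; exact hβsmall),
            show A.a + A.d = GenMatrix.tr A from rfl, ht1]
        have h2 : ‖β + 1‖ = 1 := by
          rw [add_comm]; exact padicAux_norm_one_add hβsmall
        rw [h1, h2, mul_one]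
      · -- A * Q is quasinilpotent
        apply GenMatrix.padicAux_isQuasinilpotent_of_small
        · have e : (A * ⟨v * (β - A.d), v * A.b, v * A.c, v * (β - A.a)⟩).a
              = β * (v * (β - A.d)) := by
            simp only [GenMatrix.mul_a]
            first
            | linear_combination (-v) * hβ
            | linear_combination v * hβ
          rw [e]; exact padicAux_small_mul_left _ hβsmall
        · have e : (A * ⟨v * (β - A.d), v * A.b, v * A.c, v * (β - A.a)⟩).b
              = β * (v * A.b) := by
            simp only [GenMatrix.mul_b]; ring1
          rw [e]; exact padicAux_small_mul_left _ hβsmall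
        · have e : (A * ⟨v * (β - A.d), v * A.b, v * A.c, v * (β - A.a)⟩).c
              = β * (v * A.c) := by
            simp only [GenMatrix.mul_c]; ring1
          rw [e]; exact padicAux_small_mul_left _ hβsmall
        · have e : (A * ⟨v * (β - A.d), v * A.b, v * A.c, v * (β - A.a)⟩).d
              = β * (v * (β - A.a)) := by
            simp only [GenMatrix.mul_d]
            first
            | linear_combination (-v) * hβ
            | linear_combination v * hβ
          rw [e]; exact padicAux_small_mul_left _ hβsmall
end

section
/- Let R be a commutative local ring, let s = Σ_{i≥0} s_i x^i ∈ R[[x]], and let A(x) ∈ K_s(R[[x]]); write A(0) ∈ K_{s₀}(R) for the matrix of constant terms of the entries of A(x). Then the equation t² − tr(A(0))t + det_{s₀}(A(0)) = 0 has a root in J(R) and a root in U(R) if and only if the equation t² − tr(A(x))t + det_s(A(x)) = 0 has a root in J(R[[x]]) and a root in U(R[[x]]). -/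
namespace AuxQuad

open PowerSeries

variable {R : Type*} [CommRing R]

lemma mem_span_X_pow {y : PowerSeries R} {n : ℕ} :
    y ∈ (Ideal.span {(X : PowerSeries R)}) ^ n ↔ ∀ i < n, coeff (R := R) i y = 0 := by
  rw [Ideal.span_singleton_pow, Ideal.mem_span_singleton, X_pow_dvd_iff]

instance instAdic : IsAdicComplete (Ideal.span {(X : PowerSeries R)}) (PowerSeries R) where
  haus' := by
    intro x hx
    ext i
    have := hx (i + 1)
    rw [SModEq.sub_mem, sub_zero, smul_eq_mul, Ideal.mul_top, mem_span_X_pow] at this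
    simpa using this i (Nat.lt_succ_self i)
  prec' := by
    intro f hf
    refine ⟨PowerSeries.mk (fun n => coeff (R := R) n (f (n + 1))), fun n => ?_⟩
    rw [SModEq.sub_mem, smul_eq_mul, Ideal.mul_top, mem_span_X_pow]
    intro i hi
    have h : coeff (R := R) i (f n - f (i + 1)) = 0 := by
      rcases le_total n (i + 1) with h | h
      · have h2 := hf h
        rw [SModEq.sub_mem, smul_eq_mul, Ideal.mul_top, mem_span_X_pow] at h2
        exact h2 i hi
      · have h2 := hf h
        rw [SModEq.sub_mem, smul_eq_mul, Ideal.mul_top, mem_span_X_pow] at h2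
        have h3 := h2 i (Nat.lt_succ_self i)
        rw [map_sub, sub_eq_zero] at h3
        rw [map_sub, sub_eq_zero]
        exact h3.symm
    rw [map_sub, coeff_mk]
    rw [map_sub] at h
    exact h

lemma isUnit_mk_span_X {w : PowerSeries R} (h : IsUnit (constantCoeff (R := R) w)) :
    IsUnit (Ideal.Quotient.mk (Ideal.span {(X : PowerSeries R)}) w) := by
  obtain ⟨u, hu⟩ := h
  refine IsUnit.of_mul_eq_one (Ideal.Quotient.mk _ (PowerSeries.C (R := R) ↑u⁻¹)) ?_
  rw [← map_mul, ← map_one (Ideal.Quotient.mk (Ideal.span {(X : PowerSeries R)})),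
    Ideal.Quotient.mk_eq_mk_iff_sub_mem, Ideal.mem_span_singleton, X_dvd_iff]
  simp [map_sub, map_mul, constantCoeff_C, ← hu]

lemma quad_lift [IsLocalRing R] (T D : PowerSeries R) :
    ((∃ α ∈ (Ideal.jacobson (⊥ : Ideal R)),
        α ^ 2 - constantCoeff (R := R) T * α + constantCoeff (R := R) D = 0) ∧
     (∃ β : R, IsUnit β ∧ β ^ 2 - constantCoeff (R := R) T * β + constantCoeff (R := R) D = 0)) ↔
    ((∃ α ∈ (Ideal.jacobson (⊥ : Ideal (PowerSeries R))),
        α ^ 2 - T * α + D = 0) ∧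
     (∃ β : PowerSeries R, IsUnit β ∧ β ^ 2 - T * β + D = 0)) := by
  constructor
  · rintro ⟨⟨α, hαJ, hα⟩, ⟨β, hβu, hβ⟩⟩
    -- α - β is a unit
    have hJm : Ideal.jacobson (⊥ : Ideal R) = IsLocalRing.maximalIdeal R := by
      rw [IsLocalRing.jacobson_eq_maximalIdeal ⊥ bot_ne_top]
    have hβα : IsUnit (β - α) := by
      by_contra h
      have h1 : β - α ∈ IsLocalRing.maximalIdeal R := by
        rwa [IsLocalRing.mem_maximalIdeal, mem_nonunits_iff]
      have h2 : β ∈ IsLocalRing.maximalIdeal R := by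
        have := add_mem h1 (hJm ▸ hαJ); simpa using this
      rw [IsLocalRing.mem_maximalIdeal, mem_nonunits_iff] at h2
      exact h2 hβu
    have hαβ : IsUnit (α - β) := by simpa using hβα.neg
    have hsum : α + β = constantCoeff (R := R) T := by
      have hz : (α - β) * (α + β - constantCoeff (R := R) T) = 0 := by linear_combination hα - hβ
      have := (IsUnit.mul_right_eq_zero hαβ).mp hz
      linear_combination this
    have hprod : α * β = constantCoeff (R := R) D := by linear_combination α * hsum - hα
    -- Hensel lifting
    set I : Ideal (PowerSeries R) := Ideal.span {(X : PowerSeries R)} with hI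
    set f : Polynomial (PowerSeries R) :=
      Polynomial.X ^ 2 - (Polynomial.C T * Polynomial.X + Polynomial.C (-D)) with hf
    have hmonic : f.Monic := Polynomial.monic_X_pow_sub (lt_of_le_of_lt Polynomial.degree_linear_le (by norm_num))
    have heval : ∀ a : PowerSeries R, f.eval a = a ^ 2 - T * a + D := by
      intro a; simp [hf]; ring
    have heval' : ∀ a : PowerSeries R, f.derivative.eval a = 2 * a - T := by
      intro a
      simp [hf, Polynomial.derivative_sub, Polynomial.derivative_add,
        Polynomial.derivative_C_mul, Polynomial.derivative_X_pow]
      ring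
    have h1 : f.eval (PowerSeries.C (R := R) α) ∈ I := by
      rw [heval, hI, Ideal.mem_span_singleton, X_dvd_iff]
      simp only [map_add, map_sub, map_pow, map_mul, constantCoeff_C]
      exact hα
    have h2 : IsUnit (Ideal.Quotient.mk I (f.derivative.eval (PowerSeries.C (R := R) α))) := by
      apply isUnit_mk_span_X
      rw [heval']
      have : constantCoeff (R := R) (2 * PowerSeries.C (R := R) α - T) = α - β := by
        simp only [map_sub, map_mul, constantCoeff_C, map_ofNat]
        linear_combination hsum
      rw [this]
      exact hαβ
    obtain ⟨a, ha_root, ha_sub⟩ := HenselianRing.is_henselian f hmonic (PowerSeries.C (R := R) α) h1 h2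
    have ha_eq : a ^ 2 - T * a + D = 0 := by rw [← heval]; exact ha_root
    have ha0 : constantCoeff (R := R) a = α := by
      rw [hI, Ideal.mem_span_singleton, X_dvd_iff, map_sub, constantCoeff_C,
        sub_eq_zero] at ha_sub
      exact ha_sub
    refine ⟨⟨a, ?_, ha_eq⟩, ⟨T - a, ?_, by linear_combination ha_eq⟩⟩
    · rw [Ideal.mem_jacobson_bot]
      intro y
      rw [PowerSeries.isUnit_iff_constantCoeff]
      simp only [map_add, map_mul, map_one, ha0]
      exact Ideal.mem_jacobson_bot.mp hαJ (constantCoeff (R := R) y)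
    · rw [PowerSeries.isUnit_iff_constantCoeff, map_sub, ha0]
      have : constantCoeff (R := R) T - α = β := by linear_combination -hsum
      rw [this]
      exact hβu
  · rintro ⟨⟨α, hαJ, hα⟩, ⟨β, hβu, hβ⟩⟩
    refine ⟨⟨constantCoeff (R := R) α, ?_, ?_⟩, ⟨constantCoeff (R := R) β, hβu.map _, ?_⟩⟩
    · rw [Ideal.mem_jacobson_bot]
      intro y
      have := Ideal.mem_jacobson_bot.mp hαJ (PowerSeries.C (R := R) y)
      have h2 := this.map (constantCoeff (R := R))
      simpa [map_add, map_mul, constantCoeff_C] using h2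
    · have := congrArg (constantCoeff (R := R)) hα
      simpa [map_add, map_sub, map_pow, map_mul] using this
    · have := congrArg (constantCoeff (R := R)) hβ
      simpa [map_add, map_sub, map_pow, map_mul] using this

end AuxQuad

/-- for a commutative local ring `R`, `s ∈ R[[x]]` and
`A(x) ∈ K_s(R[[x]])` with constant-term matrix `A(0) ∈ K_{s₀}(R)`, the equation
`t² - tr(A(0))t + det_{s₀}(A(0)) = 0` has a root in `J(R)` and a root in `U(R)` iff
`t² - tr(A(x))t + det_s(A(x)) = 0` has a root in `J(R[[x]])` and a root in `U(R[[x]])`. -/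
theorem genMatrix_powerSeries_root_iff {R : Type*} [CommRing R] [IsLocalRing R]
    (s : PowerSeries R) (A : GenMatrix (PowerSeries R) s)
    (A0 : GenMatrix R (PowerSeries.constantCoeff (R := R) s))
    (hA0 : A0 = ⟨PowerSeries.constantCoeff (R := R) A.a, PowerSeries.constantCoeff (R := R) A.b,
      PowerSeries.constantCoeff (R := R) A.c, PowerSeries.constantCoeff (R := R) A.d⟩) :
    ((∃ α ∈ JacobsonRadical R, α ^ 2 - GenMatrix.tr A0 * α + GenMatrix.dets A0 = 0) ∧
     (∃ β : R, IsUnit β ∧ β ^ 2 - GenMatrix.tr A0 * β + GenMatrix.dets A0 = 0)) ↔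
    ((∃ α ∈ JacobsonRadical (PowerSeries R),
        α ^ 2 - GenMatrix.tr A * α + GenMatrix.dets A = 0) ∧
     (∃ β : PowerSeries R, IsUnit β ∧
        β ^ 2 - GenMatrix.tr A * β + GenMatrix.dets A = 0)) := by
  have hT : GenMatrix.tr A0 = PowerSeries.constantCoeff (R := R) (GenMatrix.tr A) := by
    simp [hA0, GenMatrix.tr]
  have hD : GenMatrix.dets A0 = PowerSeries.constantCoeff (R := R) (GenMatrix.dets A) := by
    simp [hA0, GenMatrix.dets]
  rw [hT, hD]
  exact AuxQuad.quad_lift (GenMatrix.tr A) (GenMatrix.dets A)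
end

section
/- Let R be a commutative local ring. Then the generalized matrix ring K_0(R) (with multiplier s = 0) is quasipolar. -/
section Aux

variable {R : Type*} [CommRing R] [IsLocalRing R]

/-- In a local ring, `1 + a * t` is a unit when `a` is not a unit. -/
lemma aux_one_add_nonunit_mul {a : R} (ha : ¬IsUnit a) (t : R) : IsUnit (1 + a * t) := by
  by_contra h
  have h1 : (1:R) + a * t ∈ IsLocalRing.maximalIdeal R := h
  have h2 : a * t ∈ IsLocalRing.maximalIdeal R := Ideal.mul_mem_right _ _ ha
  have h3 : (1:R) ∈ IsLocalRing.maximalIdeal R := by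
    have := (IsLocalRing.maximalIdeal R).sub_mem h1 h2
    simpa using this
  exact h3 isUnit_one

lemma aux_sub_isUnit {a d : R} (ha : IsUnit a) (hd : ¬IsUnit d) : IsUnit (d - a) := by
  by_contra h
  apply hd
  have h1 : d - a ∈ IsLocalRing.maximalIdeal R := h
  by_contra hd'
  have h2 : d ∈ IsLocalRing.maximalIdeal R := hd'
  have : a ∈ IsLocalRing.maximalIdeal R := by
    have := (IsLocalRing.maximalIdeal R).sub_mem h2 h1
    simpa using this
  exact this ha

/-- A generalized matrix in `K_0(R)` with unit diagonal entries is a unit. -/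
lemma aux_isUnit_of_diag {A : GenMatrix R (0:R)} (ha : IsUnit A.a) (hd : IsUnit A.d) :
    IsUnit A := by
  obtain ⟨a', ha'⟩ := ha.exists_left_inv
  obtain ⟨d', hd'⟩ := hd.exists_left_inv
  refine ⟨⟨A, ⟨a', -(a' * A.b * d'), -(d' * A.c * a'), d'⟩, ?_, ?_⟩, rfl⟩
  · ext <;> simp
    · linear_combination ha'
    · linear_combination -(A.b * d') * ha'
    · linear_combination -(A.c * a') * hd'
    · linear_combination hd'
  · ext <;> simp
    · linear_combination ha'
    · linear_combination -(a' * A.b) * hd'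
    · linear_combination -(d' * A.c) * ha'
    · linear_combination hd'

/-- A generalized matrix in `K_0(R)` with non-unit diagonal entries is quasinilpotent. -/
lemma aux_quasinil_of_diag {A : GenMatrix R (0:R)} (ha : ¬IsUnit A.a) (hd : ¬IsUnit A.d) :
    IsQuasinilpotent A := by
  intro X _
  apply aux_isUnit_of_diag
  · simpa using aux_one_add_nonunit_mul ha X.a
  · simpa using aux_one_add_nonunit_mul hd X.d

end Aux

/-- for a commutative local ring `R`, the generalized matrix ring `K_0(R)`
is quasipolar. -/
theorem genMatrix_zero_isQuasipolarRing {R : Type*} [CommRing R] [IsLocalRing R] :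
    IsQuasipolarRing (GenMatrix R (0 : R)) := by
  intro A
  have h0 : ¬IsUnit (0 : R) := by
    simpa using (IsLocalRing.maximalIdeal R).zero_mem
  by_cases ha : IsUnit A.a <;> by_cases hd : IsUnit A.d
  · -- both diagonal entries units : p = 0
    refine ⟨0, by simp [IsIdempotentElem], fun y _ => by simp, ?_, ?_⟩
    · simpa using aux_isUnit_of_diag ha hd
    · intro x _
      simpa using isUnit_one
  · -- a unit, d non-unit
    obtain ⟨v, hv⟩ := (aux_sub_isUnit ha hd).exists_left_inv
    refine ⟨⟨0, A.b * v, A.c * v, 1⟩, ?_, ?_, ?_, ?_⟩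
    · ext <;> simp
    · intro Y hY
      have hb := congrArg GenMatrix.b hY
      have hc := congrArg GenMatrix.c hY
      simp at hb hc
      ext <;> simp
      · linear_combination (-v) * hb + Y.b * hv
      · linear_combination (-v) * hc - Y.c * hv
    · apply aux_isUnit_of_diag <;> simp
      · exact ha
      · simpa [add_comm] using aux_one_add_nonunit_mul hd 1
    · apply aux_quasinil_of_diag <;> simp [h0, hd]
  · -- a non-unit, d unit
    obtain ⟨v, hv⟩ := (aux_sub_isUnit hd ha).exists_left_inv
    refine ⟨⟨1, A.b * v, A.c * v, 0⟩, ?_, ?_, ?_, ?_⟩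
    · ext <;> simp
    · intro Y hY
      have hb := congrArg GenMatrix.b hY
      have hc := congrArg GenMatrix.c hY
      simp at hb hc
      ext <;> simp
      · linear_combination (-v) * hb - Y.b * hv
      · linear_combination (-v) * hc + Y.c * hv
    · apply aux_isUnit_of_diag <;> simp
      · simpa [add_comm] using aux_one_add_nonunit_mul ha 1
      · exact hd
    · apply aux_quasinil_of_diag <;> simp [h0, ha]
  · -- both non-units : p = 1
    refine ⟨1, by simp [IsIdempotentElem], fun y _ => by rw [mul_one, one_mul], ?_, ?_⟩
    · apply aux_isUnit_of_diag <;> simp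
      · simpa [add_comm] using aux_one_add_nonunit_mul ha 1
      · simpa [add_comm] using aux_one_add_nonunit_mul hd 1
    · rw [mul_one]
      exact aux_quasinil_of_diag ha hd
end
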